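/- Let I be an ideal of R. Then D_S(I) is quasi-compact with respect to the S-Zariski topology if and only if I is S-radically finite. -/

import Mathlib

/-- An ideal `P` is `S`-prime if `P ∩ S = ∅` and there is `s ∈ S` such that
whenever `a * b ∈ P`, either `s * a ∈ P` or `s * b ∈ P`. -/
def IsSPrime {R : Type*} [CommRing R] (S : Set R) (P : Ideal R) : Prop :=
  (P : Set R) ∩ S = ∅ ∧ ∃ s ∈ S, ∀ a b : R, a * b ∈ P → s * a ∈ P ∨ s * b ∈ P

/-- The `S`-prime spectrum `Spec_S R`: the set of all `S`-prime ideals of `R`. -/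
def SSpec {R : Type*} [CommRing R] (S : Set R) : Type _ :=
  {P : Ideal R // IsSPrime S P}

/-- The `S`-variety of an ideal `I`:
`V_S(I) = {P ∈ Spec_S R | s • I ⊆ P for some s ∈ S}`. -/
def SVar {R : Type*} [CommRing R] (S : Set R) (I : Ideal R) : Set (SSpec S) :=
  {P | ∃ s ∈ S, ∀ x ∈ I, s * x ∈ P.1}

/-- The `S`-radical of an ideal `I`:
`√[S](I) = {a ∈ R | s * a ^ n ∈ I for some s ∈ S, n ∈ ℕ}`. -/
def SRad {R : Type*} [CommRing R] (S : Set R) (I : Ideal R) : Set R :=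
  {a | ∃ s ∈ S, ∃ n : ℕ, s * a ^ n ∈ I}

/-- The `S`-Zariski topology on `Spec_S R`: the closed sets are exactly the `V_S(I)`. -/
def sZariskiTop {R : Type*} [CommRing R] (S : Set R) : TopologicalSpace (SSpec S) :=
  TopologicalSpace.generateFrom {U | ∃ I : Ideal R, U = (SVar S I)ᶜ}

/-- The `S`-flat topology on `Spec_S R`: the coarsest topology in which every
`V_S(f)`, `f ∈ R`, is open. -/
def sFlatTop {R : Type*} [CommRing R] (S : Set R) : TopologicalSpace (SSpec S) :=
  TopologicalSpace.generateFrom {U | ∃ f : R, U = SVar S (Ideal.span {f})}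

/-- An ideal `I` is `S`-radically finite if `√[S](I) = √[S](J)` for some finitely
generated ideal `J`. -/
def SRadFinite {R : Type*} [CommRing R] (S : Set R) (I : Ideal R) : Prop :=
  ∃ J : Ideal R, J.FG ∧ SRad S I = SRad S J

section Aux
variable {R : Type*} [CommRing R] {S : Set R}

/-- The colon-type ideal `(P : s) = {x | s * x ∈ P}`. -/
def wIdeal (P : Ideal R) (s : R) : Ideal R :=
  Submodule.comap (LinearMap.lsmul R R s) P

lemma mem_wIdeal {P : Ideal R} {s x : R} : x ∈ wIdeal P s ↔ s * x ∈ P := by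
  simp [wIdeal, Submodule.mem_comap, smul_eq_mul]

lemma notin_of_mem_S {P : Ideal R} (hdisj : (P : Set R) ∩ S = ∅) {x : R}
    (hx : x ∈ S) : x ∉ P := fun hxP =>
  Set.eq_empty_iff_forall_notMem.mp hdisj x ⟨hxP, hx⟩

lemma mem_SRad_self (hS1 : (1 : R) ∈ S) {K : Ideal R} {a : R} (ha : a ∈ K) :
    a ∈ SRad S K := ⟨1, hS1, 1, by simpa using ha⟩

lemma SVar_anti {K J : Ideal R} (h : K ≤ J) : SVar S J ⊆ SVar S K := by
  rintro P ⟨s, hsS, hs⟩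
  exact ⟨s, hsS, fun x hx => hs x (h hx)⟩

variable (hSmul : ∀ s ∈ S, ∀ t ∈ S, s * t ∈ S)
variable {P : Ideal R} (hdisj : (P : Set R) ∩ S = ∅) {s : R} (hsS : s ∈ S)
  (hw : ∀ a b : R, a * b ∈ P → s * a ∈ P ∨ s * b ∈ P)

include hSmul hdisj hsS hw

lemma absorb {t x : R} (htS : t ∈ S) (htx : t * x ∈ P) : s * x ∈ P := by
  rcases hw t x htx with h | h
  · exact absurd h (notin_of_mem_S hdisj (hSmul s hsS t htS))
  · exact h

lemma wIdeal_prime : (wIdeal P s).IsPrime := by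
  constructor
  · intro htop
    have : (1 : R) ∈ wIdeal P s := htop ▸ Submodule.mem_top
    rw [mem_wIdeal, mul_one] at this
    exact notin_of_mem_S hdisj hsS this
  · intro a b hab
    rw [mem_wIdeal] at hab
    have h1 : (s * a) * b ∈ P := by rw [mul_assoc]; exact hab
    rcases hw (s * a) b h1 with h | h
    · left
      rw [mem_wIdeal]
      have h2 : (s * s) * a ∈ P := by rw [mul_assoc]; exact h
      exact absorb hSmul hdisj hsS hw (hSmul s hsS s hsS) h2
    · right; exact mem_wIdeal.mpr h

lemma wIdeal_disj {t : R} (htS : t ∈ S) : t ∉ wIdeal P s := by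
  intro h
  rw [mem_wIdeal] at h
  exact notin_of_mem_S hdisj (hSmul s hsS t htS) h

lemma mem_SVar_iff (hP : IsSPrime S P) {K : Ideal R} :
    (⟨P, hP⟩ : SSpec S) ∈ SVar S K ↔ K ≤ wIdeal P s := by
  constructor
  · rintro ⟨t, htS, ht⟩ x hx
    exact mem_wIdeal.mpr (absorb hSmul hdisj hsS hw htS (ht x hx))
  · intro h
    exact ⟨s, hsS, fun x hx => mem_wIdeal.mp (h hx)⟩

lemma SRad_le_wIdeal {K : Ideal R} (h : K ≤ wIdeal P s) :
    SRad S K ⊆ (wIdeal P s : Set R) := by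
  rintro a ⟨t, htS, n, htn⟩
  have hmem : t * a ^ n ∈ wIdeal P s := h htn
  have hprime := wIdeal_prime hSmul hdisj hsS hw
  rcases hprime.mem_or_mem hmem with h' | h'
  · exact absurd h' (wIdeal_disj hSmul hdisj hsS hw htS)
  · exact hprime.mem_of_pow_mem n h'

lemma mem_SVar_iff_SRad (hS1 : (1 : R) ∈ S) (hP : IsSPrime S P) {K : Ideal R} :
    (⟨P, hP⟩ : SSpec S) ∈ SVar S K ↔ SRad S K ⊆ (wIdeal P s : Set R) := by
  rw [mem_SVar_iff hSmul hdisj hsS hw hP]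
  constructor
  · exact SRad_le_wIdeal hSmul hdisj hsS hw
  · intro h x hx
    exact h (mem_SRad_self hS1 hx)

end Aux

section Aux2
variable {R : Type*} [CommRing R] {S : Set R}
variable (hS1 : (1 : R) ∈ S) (hSmul : ∀ s ∈ S, ∀ t ∈ S, s * t ∈ S)

include hS1 hSmul in
lemma SVar_eq_of_SRad_eq {K J : Ideal R} (h : SRad S K = SRad S J) :
    SVar S K = SVar S J := by
  ext ⟨P, hP⟩
  obtain ⟨hdisj, s, hsS, hw⟩ := hP
  erw [mem_SVar_iff_SRad hSmul hdisj hsS hw hS1 ⟨hdisj, s, hsS, hw⟩,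
    mem_SVar_iff_SRad hSmul hdisj hsS hw hS1 ⟨hdisj, s, hsS, hw⟩, h]

include hS1 hSmul in
/-- S-Nullstellensatz: if `a ∉ √[S] K` then some S-prime separates. -/
lemma exists_SSpec_of_not_mem_SRad {K : Ideal R} {a : R} (h : a ∉ SRad S K) :
    ∃ Q : SSpec S, Q ∈ SVar S K ∧ Q ∉ SVar S (Ideal.span {a}) := by
  set M : Submonoid R :=
    { carrier := {x | ∃ t ∈ S, ∃ n : ℕ, t * a ^ n = x}
      mul_mem' := by
        rintro x y ⟨t, htS, m, rfl⟩ ⟨u, huS, n, rfl⟩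
        exact ⟨t * u, hSmul t htS u huS, m + n, by ring⟩
      one_mem' := ⟨1, hS1, 0, by ring⟩ } with hM
  have hdisj : Disjoint (K : Set R) (M : Set R) := by
    rw [Set.disjoint_right]
    rintro x ⟨t, htS, n, rfl⟩ hxK
    exact h ⟨t, htS, n, hxK⟩
  obtain ⟨p, hp, hKp, hpM⟩ := Ideal.exists_le_prime_disjoint K M hdisj
  have hpS : (p : Set R) ∩ S = ∅ := by
    rw [Set.eq_empty_iff_forall_notMem]
    rintro x ⟨hxp, hxS⟩
    exact Set.disjoint_left.mp hpM hxp ⟨x, hxS, 0, by ring⟩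
  have hQ : IsSPrime S p := by
    refine ⟨hpS, 1, hS1, fun x y hxy => ?_⟩
    rcases hp.mem_or_mem hxy with h' | h'
    · exact Or.inl (by rwa [one_mul])
    · exact Or.inr (by rwa [one_mul])
  refine ⟨⟨p, hQ⟩, ⟨1, hS1, fun x hx => by rw [one_mul]; exact hKp hx⟩, ?_⟩
  rintro ⟨t, htS, ht⟩
  have hta : t * a ∈ p := ht a (Ideal.mem_span_singleton_self a)
  exact Set.disjoint_left.mp hpM hta ⟨t, htS, 1, by ring⟩

include hSmul in
lemma SVar_inf (K J : Ideal R) : SVar S (K ⊓ J) = SVar S K ∪ SVar S J := by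
  ext ⟨P, hP⟩
  obtain ⟨hdisj, s, hsS, hw⟩ := hP
  erw [Set.mem_union, mem_SVar_iff hSmul hdisj hsS hw ⟨hdisj, s, hsS, hw⟩,
    mem_SVar_iff hSmul hdisj hsS hw ⟨hdisj, s, hsS, hw⟩,
    mem_SVar_iff hSmul hdisj hsS hw ⟨hdisj, s, hsS, hw⟩]
  exact (wIdeal_prime hSmul hdisj hsS hw).inf_le

lemma SVar_top : SVar S (⊤ : Ideal R) = ∅ := by
  rw [Set.eq_empty_iff_forall_notMem]
  rintro ⟨P, hP⟩ ⟨s, hsS, hs⟩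
  have : s * 1 ∈ P := hs 1 trivial
  rw [mul_one] at this
  exact notin_of_mem_S hP.1 hsS this

include hSmul in
/-- Every open set in the S-Zariski topology is a union of basic opens. -/
lemma exists_basic_subset {u : Set (SSpec S)}
    (hu : TopologicalSpace.GenerateOpen {U | ∃ I : Ideal R, U = (SVar S I)ᶜ} u)
    {P : SSpec S} (hP : P ∈ u) :
    ∃ K : Ideal R, P ∈ (SVar S K)ᶜ ∧ (SVar S K)ᶜ ⊆ u := by
  induction hu with
  | basic v hv => obtain ⟨K, rfl⟩ := hv; exact ⟨K, hP, le_refl _⟩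
  | univ => exact ⟨⊤, by simp [SVar_top], by simp⟩
  | inter v w hv hw ihv ihw =>
      obtain ⟨K₁, hPK₁, hK₁⟩ := ihv hP.1
      obtain ⟨K₂, hPK₂, hK₂⟩ := ihw hP.2
      refine ⟨K₁ ⊓ K₂, ?_, ?_⟩
      · rw [SVar_inf hSmul]
        exact fun h => h.elim hPK₁ hPK₂
      · rw [SVar_inf hSmul, Set.compl_union]
        exact fun Q hQ => ⟨hK₁ hQ.1, hK₂ hQ.2⟩
  | sUnion ts hts ih =>
      obtain ⟨t, htts, hPt⟩ := hP
      obtain ⟨K, hPK, hK⟩ := ih t htts hPt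
      exact ⟨K, hPK, fun Q hQ => ⟨t, htts, hK hQ⟩⟩

end Aux2


/-- `D_S(I)` is quasi-compact with respect to the `S`-Zariski topology if and only if
`I` is `S`-radically finite. -/
theorem isCompact_sZariski_dS_iff_sRadFinite {R : Type*} [CommRing R] [Nontrivial R]
    (S : Set R)
    (hS0 : (0 : R) ∉ S) (hS1 : (1 : R) ∈ S) (hSmul : ∀ s ∈ S, ∀ t ∈ S, s * t ∈ S)
    (I : Ideal R) :
    @IsCompact (SSpec S) (sZariskiTop S) (SVar S I)ᶜ ↔ SRadFinite S I := by
  classical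
  letI : TopologicalSpace (SSpec S) := sZariskiTop S
  constructor
  · -- compact → S-radically finite
    intro hc
    set U : I → Set (SSpec S) := fun x => (SVar S (Ideal.span {(x : R)}))ᶜ with hU
    have hUopen : ∀ x : I, IsOpen (U x) := fun x =>
      TopologicalSpace.GenerateOpen.basic _ ⟨_, rfl⟩
    have hcov : (SVar S I)ᶜ ⊆ ⋃ x : I, U x := by
      rintro ⟨P, hP⟩ hPmem
      obtain ⟨hdisj, s, hsS, hw⟩ := hP
      by_contra hno
      erw [Set.mem_iUnion] at hno
      push_neg at hno
      refine hPmem ⟨s, hsS, fun x hx => ?_⟩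
      have := hno ⟨x, hx⟩
      rw [hU] at this
      simp only [Set.mem_compl_iff, not_not] at this
      obtain ⟨t, htS, ht⟩ : (⟨P, ⟨hdisj, s, hsS, hw⟩⟩ : SSpec S) ∈ SVar S (Ideal.span {x}) :=
        Classical.byContradiction fun hn => this hn
      exact absorb hSmul hdisj hsS hw htS (ht x (Ideal.mem_span_singleton_self x))
    obtain ⟨t, ht⟩ := hc.elim_finite_subcover U hUopen hcov
    set T : Finset R := t.image (fun y : I => (y : R)) with hT
    refine ⟨Ideal.span ↑T, ⟨T, rfl⟩, Set.Subset.antisymm ?_ ?_⟩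
    · -- SRad I ⊆ SRad (span T)
      intro a ha
      by_contra hna
      obtain ⟨Q, hQV, hQn⟩ := exists_SSpec_of_not_mem_SRad hS1 hSmul hna
      have hQI : Q ∈ SVar S I := by
        by_contra hQI
        have := ht hQI
        rw [Set.mem_iUnion₂] at this
        obtain ⟨x, hxt, hx⟩ := this
        refine hx ?_
        refine SVar_anti ?_ hQV
        rw [Ideal.span_le, Set.singleton_subset_iff]
        exact Ideal.subset_span (Finset.mem_coe.mpr (by
          rw [hT]
          exact Finset.mem_image_of_mem _ hxt))
      obtain ⟨P, hP⟩ := Q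
      obtain ⟨hdisj, s, hsS, hw⟩ := hP
      obtain ⟨u, huS, hu⟩ := hQI
      obtain ⟨v, hvS, n, hv⟩ := ha
      have h1 : (u * v) * a ^ n ∈ P := by
        have := hu _ hv
        rwa [← mul_assoc] at this
      have h2 : s * a ^ n ∈ P := absorb hSmul hdisj hsS hw (hSmul u huS v hvS) h1
      have h3 : a ∈ wIdeal P s :=
        (wIdeal_prime hSmul hdisj hsS hw).mem_of_pow_mem n (mem_wIdeal.mpr h2)
      refine hQn ⟨s, hsS, fun y hy => ?_⟩
      obtain ⟨c, rfl⟩ := Ideal.mem_span_singleton.mp hy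
      have hsa : s * a ∈ P := mem_wIdeal.mp h3
      have heq : s * (a * c) = (s * a) * c := by ring
      rw [heq]
      exact P.mul_mem_right c hsa
    · -- SRad (span T) ⊆ SRad I
      intro a ⟨u, huS, n, hu⟩
      refine ⟨u, huS, n, ?_⟩
      have hTI : Ideal.span (↑T : Set R) ≤ I := by
        rw [Ideal.span_le]
        intro x hx
        rw [Finset.mem_coe, hT] at hx
        obtain ⟨y, _, rfl⟩ := Finset.mem_image.mp hx
        exact y.2
      exact hTI hu
  · -- S-radically finite → compact
    rintro ⟨J, ⟨T, rfl⟩, hrad⟩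
    have hVeq : SVar S I = SVar S (Ideal.span ↑T) := SVar_eq_of_SRad_eq hS1 hSmul hrad
    rw [hVeq]
    refine isCompact_of_finite_subcover fun {ι} U hUopen hcov => ?_
    -- choose basic opens inside the cover
    set D : Set (SSpec S) := (SVar S (Ideal.span (↑T : Set R)))ᶜ with hD
    have hbasic : ∀ P : D, ∃ K : Ideal R, ∃ i : ι,
        (P : SSpec S) ∈ (SVar S K)ᶜ ∧ (SVar S K)ᶜ ⊆ U i := by
      intro P
      obtain ⟨i, hi⟩ := Set.mem_iUnion.mp (hcov P.2)
      obtain ⟨K, hPK, hK⟩ := exists_basic_subset hSmul (hUopen i) hi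
      exact ⟨K, i, hPK, hK⟩
    choose K idx hmemK hsubK using hbasic
    -- for each generator f of T, f is in the S-radical of the sup of the K's
    have hgen : ∀ f ∈ T, ∃ F : Finset D,
        ∃ u ∈ S, ∃ n : ℕ, u * f ^ n ∈ ⨆ P ∈ F, K P := by
      intro f hf
      have hfrad : f ∈ SRad S (⨆ P : D, K P) := by
        by_contra hno
        obtain ⟨Q, hQV, hQn⟩ := exists_SSpec_of_not_mem_SRad hS1 hSmul hno
        have hQT : Q ∈ D := by
          intro hQT
          exact hQn (SVar_anti (by
            rw [Ideal.span_le, Set.singleton_subset_iff]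
            exact Ideal.subset_span hf) hQT)
        exact hmemK ⟨Q, hQT⟩ (SVar_anti (le_iSup K ⟨Q, hQT⟩) hQV)
      obtain ⟨u, huS, n, hun⟩ := hfrad
      obtain ⟨F, hF⟩ := Submodule.mem_iSup_iff_exists_finset.mp hun
      exact ⟨F, u, huS, n, hF⟩
    choose Ff uf hufS nf hmemF using hgen
    set F : Finset D := T.attach.biUnion (fun f => Ff f.1 f.2) with hFdef
    refine ⟨F.image idx, ?_⟩
    rintro ⟨P, hP⟩ hPmem
    obtain ⟨hdisj, s, hsS, hw⟩ := hP
    have hnotle : ¬ (Ideal.span (↑T : Set R) ≤ wIdeal P s) := by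
      intro hle
      exact hPmem ((mem_SVar_iff hSmul hdisj hsS hw ⟨hdisj, s, hsS, hw⟩).mpr hle)
    have : ∃ f ∈ T, f ∉ wIdeal P s := by
      by_contra hall
      push_neg at hall
      exact hnotle (Ideal.span_le.mpr fun x hx => hall x (Finset.mem_coe.mp hx))
    obtain ⟨f, hfT, hfn⟩ := this
    have hprime := wIdeal_prime hSmul hdisj hsS hw
    -- some K in Ff f must not be ≤ wIdeal P s
    have hex : ∃ Q ∈ Ff f hfT, ¬ (K Q ≤ wIdeal P s) := by
      by_contra hall
      push_neg at hall
      have hsup : (⨆ Q ∈ Ff f hfT, K Q) ≤ wIdeal P s := iSup₂_le hall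
      have h1 : uf f hfT * f ^ nf f hfT ∈ wIdeal P s := hsup (hmemF f hfT)
      rcases hprime.mem_or_mem h1 with h' | h'
      · exact wIdeal_disj hSmul hdisj hsS hw (hufS f hfT) h'
      · exact hfn (hprime.mem_of_pow_mem _ h')
    obtain ⟨Q, hQF, hQn⟩ := hex
    have hQmem : (⟨P, ⟨hdisj, s, hsS, hw⟩⟩ : SSpec S) ∈ (SVar S (K Q))ᶜ := by
      intro hmem
      exact hQn ((mem_SVar_iff hSmul hdisj hsS hw ⟨hdisj, s, hsS, hw⟩).mp hmem)
    erw [Set.mem_iUnion₂]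
    refine ⟨idx Q, Finset.mem_image.mpr ⟨Q, ?_, rfl⟩, hsubK Q hQmem⟩
    rw [hFdef]
    exact Finset.mem_biUnion.mpr ⟨⟨f, hfT⟩, T.mem_attach _, hQF⟩
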